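/- Let S be a nonempty finite set. For pmfs p, q on S define D_H²(p,q) = (1/2)·Σ_{s∈S} (√p(s) − √q(s))², and for n ≥ 1 define the total variation distance between n-fold product distributions TV_n(p,q) = (1/2)·Σ_{ω ∈ S^n} | ∏_{i=1}^n p(ω_i) − ∏_{i=1}^n q(ω_i) |. If (p_n)_{n≥1} and (q_n)_{n≥1} are sequences of pmfs on S, then TV_n(p_n, q_n) → 0 as n → ∞ if and only if n·D_H²(p_n, q_n) → 0 as n → ∞. -/
import Mathlib

open scoped BigOperators

lemma my_sqrt_prod {ι : Type*} (s : Finset ι) (f : ι → ℝ) (h : ∀ i ∈ s, 0 ≤ f i) :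
    Real.sqrt (∏ i ∈ s, f i) = ∏ i ∈ s, Real.sqrt (f i) := by
  induction s using Finset.cons_induction with
  | empty => simp
  | cons a s ha ih =>
    rw [Finset.prod_cons, Finset.prod_cons, Real.sqrt_mul (h a (Finset.mem_cons_self a s)),
      ih (fun i hi => h i (Finset.mem_cons_of_mem hi))]

lemma my_sq_abs_le {a b : ℝ} (ha : 0 ≤ a) (hb : 0 ≤ b) :
    (Real.sqrt a - Real.sqrt b) ^ 2 ≤ |a - b| := by
  have h1 := Real.sq_sqrt ha
  have h2 := Real.sq_sqrt hb
  have h3 := Real.sqrt_nonneg a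
  have h4 := Real.sqrt_nonneg b
  rcases le_total b a with hle | hle
  · have h5 : Real.sqrt b ≤ Real.sqrt a := Real.sqrt_le_sqrt hle
    rw [abs_of_nonneg (by linarith)]
    nlinarith [mul_nonneg (sub_nonneg.mpr h5) h4]
  · have h5 : Real.sqrt a ≤ Real.sqrt b := Real.sqrt_le_sqrt hle
    rw [abs_of_nonpos (by linarith)]
    nlinarith [mul_nonneg (sub_nonneg.mpr h5) h3]

lemma my_hell_id {Ω : Type*} [Fintype Ω] (P Q : Ω → ℝ) (hP0 : ∀ x, 0 ≤ P x) (hQ0 : ∀ x, 0 ≤ Q x)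
    (hP1 : ∑ x, P x = 1) (hQ1 : ∑ x, Q x = 1) :
    ∑ x, (Real.sqrt (P x) - Real.sqrt (Q x)) ^ 2
      = 2 - 2 * ∑ x, Real.sqrt (P x) * Real.sqrt (Q x) := by
  have : ∀ x, (Real.sqrt (P x) - Real.sqrt (Q x)) ^ 2
      = P x + Q x - 2 * (Real.sqrt (P x) * Real.sqrt (Q x)) := by
    intro x
    have h1 := Real.sq_sqrt (hP0 x)
    have h2 := Real.sq_sqrt (hQ0 x)
    ring_nf
    nlinarith [Real.sqrt_nonneg (P x)]
  simp only [this]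
  rw [Finset.sum_sub_distrib, Finset.sum_add_distrib, hP1, hQ1, ← Finset.mul_sum]
  ring

lemma my_B_mem {Ω : Type*} [Fintype Ω] (P Q : Ω → ℝ) (hP0 : ∀ x, 0 ≤ P x) (hQ0 : ∀ x, 0 ≤ Q x)
    (hP1 : ∑ x, P x = 1) (hQ1 : ∑ x, Q x = 1) :
    0 ≤ ∑ x, Real.sqrt (P x) * Real.sqrt (Q x) ∧ ∑ x, Real.sqrt (P x) * Real.sqrt (Q x) ≤ 1 := by
  have h0 : 0 ≤ ∑ x, Real.sqrt (P x) * Real.sqrt (Q x) :=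
    Finset.sum_nonneg fun x _ => mul_nonneg (Real.sqrt_nonneg _) (Real.sqrt_nonneg _)
  refine ⟨h0, ?_⟩
  have hcs := Finset.sum_mul_sq_le_sq_mul_sq Finset.univ
    (fun x => Real.sqrt (P x)) (fun x => Real.sqrt (Q x))
  simp only [Real.sq_sqrt (hP0 _), Real.sq_sqrt (hQ0 _)] at hcs
  rw [hP1, hQ1] at hcs
  nlinarith

lemma my_tv_ge {Ω : Type*} [Fintype Ω] (P Q : Ω → ℝ) (hP0 : ∀ x, 0 ≤ P x) (hQ0 : ∀ x, 0 ≤ Q x)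
    (hP1 : ∑ x, P x = 1) (hQ1 : ∑ x, Q x = 1) :
    1 - ∑ x, Real.sqrt (P x) * Real.sqrt (Q x) ≤ (1 / 2) * ∑ x, |P x - Q x| := by
  have key : ∑ x, (Real.sqrt (P x) - Real.sqrt (Q x)) ^ 2 ≤ ∑ x, |P x - Q x| :=
    Finset.sum_le_sum fun x _ => my_sq_abs_le (hP0 x) (hQ0 x)
  rw [my_hell_id P Q hP0 hQ0 hP1 hQ1] at key
  linarith

lemma my_tv_le {Ω : Type*} [Fintype Ω] (P Q : Ω → ℝ) (hP0 : ∀ x, 0 ≤ P x) (hQ0 : ∀ x, 0 ≤ Q x)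
    (hP1 : ∑ x, P x = 1) (hQ1 : ∑ x, Q x = 1) :
    (1 / 2) * ∑ x, |P x - Q x|
      ≤ Real.sqrt (2 * (1 - ∑ x, Real.sqrt (P x) * Real.sqrt (Q x))) := by
  set B := ∑ x, Real.sqrt (P x) * Real.sqrt (Q x) with hB
  obtain ⟨hB0, hB1⟩ := my_B_mem P Q hP0 hQ0 hP1 hQ1
  have habs : ∀ x, |P x - Q x| = |Real.sqrt (P x) - Real.sqrt (Q x)|
      * (Real.sqrt (P x) + Real.sqrt (Q x)) := by
    intro x
    rw [← abs_of_nonneg (add_nonneg (Real.sqrt_nonneg (P x)) (Real.sqrt_nonneg (Q x))),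
      ← abs_mul]
    congr 1
    have h1 := Real.sq_sqrt (hP0 x)
    have h2 := Real.sq_sqrt (hQ0 x)
    nlinarith [Real.sqrt_nonneg (P x)]
  have hsum2 : ∑ x, (Real.sqrt (P x) + Real.sqrt (Q x)) ^ 2 = 2 + 2 * B := by
    have : ∀ x, (Real.sqrt (P x) + Real.sqrt (Q x)) ^ 2
        = P x + Q x + 2 * (Real.sqrt (P x) * Real.sqrt (Q x)) := by
      intro x
      have h1 := Real.sq_sqrt (hP0 x)
      have h2 := Real.sq_sqrt (hQ0 x)
      nlinarith [Real.sqrt_nonneg (P x)]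
    simp only [this]
    rw [Finset.sum_add_distrib, Finset.sum_add_distrib, hP1, hQ1, ← Finset.mul_sum, hB]
    norm_num
  have hcs := Finset.sum_mul_sq_le_sq_mul_sq Finset.univ
    (fun x => |Real.sqrt (P x) - Real.sqrt (Q x)|) (fun x => Real.sqrt (P x) + Real.sqrt (Q x))
  simp only [sq_abs] at hcs
  rw [my_hell_id P Q hP0 hQ0 hP1 hQ1, hsum2] at hcs
  have hT0 : 0 ≤ ∑ x, |P x - Q x| := Finset.sum_nonneg fun x _ => abs_nonneg _
  have hTk : (∑ x, |P x - Q x|) ^ 2 ≤ (2 - 2 * B) * (2 + 2 * B) := by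
    calc (∑ x, |P x - Q x|) ^ 2
        = (∑ x, |Real.sqrt (P x) - Real.sqrt (Q x)| * (Real.sqrt (P x) + Real.sqrt (Q x))) ^ 2 := by
          congr 1; exact Finset.sum_congr rfl fun x _ => habs x
      _ ≤ (2 - 2 * B) * (2 + 2 * B) := hcs
  have hfin : ((1 / 2) * ∑ x, |P x - Q x|) ^ 2 ≤ 2 * (1 - B) := by nlinarith
  calc (1 / 2) * ∑ x, |P x - Q x|
      = Real.sqrt (((1 / 2) * ∑ x, |P x - Q x|) ^ 2) := (Real.sqrt_sq (by positivity)).symm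
    _ ≤ Real.sqrt (2 * (1 - B)) := Real.sqrt_le_sqrt hfin

/-- Squared Hellinger distance between two pmfs on a finite set. -/
noncomputable def hellSq {S : Type*} [Fintype S] (p q : S → ℝ) : ℝ :=
  (1 / 2) * ∑ s, (Real.sqrt (p s) - Real.sqrt (q s)) ^ 2

/-- Total variation distance between the `n`-fold product distributions of two pmfs on a
finite set `S`. -/
noncomputable def tvProd {S : Type*} [Fintype S] (n : ℕ) (p q : S → ℝ) : ℝ :=
  (1 / 2) * ∑ ω : Fin n → S, |(∏ i, p (ω i)) - ∏ i, q (ω i)|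

section Bounds

variable {S : Type*} [Fintype S]

lemma my_prod_facts (n : ℕ) (p q : S → ℝ) (hp0 : ∀ s, 0 ≤ p s) (hq0 : ∀ s, 0 ≤ q s)
    (hp1 : ∑ s, p s = 1) (hq1 : ∑ s, q s = 1) :
    1 - (∑ s, Real.sqrt (p s) * Real.sqrt (q s)) ^ n ≤ tvProd n p q ∧
    tvProd n p q ≤ Real.sqrt (2 * (1 - (∑ s, Real.sqrt (p s) * Real.sqrt (q s)) ^ n)) := by
  set P : (Fin n → S) → ℝ := fun ω => ∏ i, p (ω i) with hP
  set Q : (Fin n → S) → ℝ := fun ω => ∏ i, q (ω i) with hQ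
  have hP0 : ∀ ω, 0 ≤ P ω := fun ω => Finset.prod_nonneg fun i _ => hp0 _
  have hQ0 : ∀ ω, 0 ≤ Q ω := fun ω => Finset.prod_nonneg fun i _ => hq0 _
  have hP1 : ∑ ω, P ω = 1 := by rw [← Fintype.sum_pow p n, hp1, one_pow]
  have hQ1 : ∑ ω, Q ω = 1 := by rw [← Fintype.sum_pow q n, hq1, one_pow]
  have hBB : ∑ ω, Real.sqrt (P ω) * Real.sqrt (Q ω)
      = (∑ s, Real.sqrt (p s) * Real.sqrt (q s)) ^ n := by
    rw [Fintype.sum_pow (fun s => Real.sqrt (p s) * Real.sqrt (q s)) n]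
    refine Finset.sum_congr rfl fun ω _ => ?_
    rw [hP, hQ]
    rw [my_sqrt_prod Finset.univ _ (fun i _ => hp0 (ω i)),
      my_sqrt_prod Finset.univ _ (fun i _ => hq0 (ω i)), ← Finset.prod_mul_distrib]
  constructor
  · have := my_tv_ge P Q hP0 hQ0 hP1 hQ1
    rw [hBB] at this
    exact this
  · have := my_tv_le P Q hP0 hQ0 hP1 hQ1
    rw [hBB] at this
    exact this

end Bounds

/-- For sequences `p n`, `q n` of pmfs on a nonempty finite set `S`, the total
variation distance between the `n`-fold products tends to `0` iff `n · D_H²(p n, q n)` tends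
to `0`. -/
theorem tvProd_tendsto_zero_iff_n_mul_hellSq_tendsto_zero
    {S : Type*} [Fintype S] [Nonempty S]
    (p q : ℕ → S → ℝ)
    (hp0 : ∀ n s, 0 ≤ p n s) (hq0 : ∀ n s, 0 ≤ q n s)
    (hp1 : ∀ n, ∑ s, p n s = 1) (hq1 : ∀ n, ∑ s, q n s = 1) :
    Filter.Tendsto (fun n => tvProd n (p n) (q n)) Filter.atTop (nhds 0) ↔
      Filter.Tendsto (fun n : ℕ => (n : ℝ) * hellSq (p n) (q n)) Filter.atTop (nhds 0) := by
  set B : ℕ → ℝ := fun n => ∑ s, Real.sqrt (p n s) * Real.sqrt (q n s) with hBdef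
  have hB0 : ∀ n, 0 ≤ B n := fun n => (my_B_mem _ _ (hp0 n) (hq0 n) (hp1 n) (hq1 n)).1
  have hB1 : ∀ n, B n ≤ 1 := fun n => (my_B_mem _ _ (hp0 n) (hq0 n) (hp1 n) (hq1 n)).2
  have hhell : ∀ n, hellSq (p n) (q n) = 1 - B n := by
    intro n
    rw [hellSq, my_hell_id _ _ (hp0 n) (hq0 n) (hp1 n) (hq1 n)]
    ring
  have hlow : ∀ n, 1 - B n ^ n ≤ tvProd n (p n) (q n) :=
    fun n => (my_prod_facts n (p n) (q n) (hp0 n) (hq0 n) (hp1 n) (hq1 n)).1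
  have hhigh : ∀ n, tvProd n (p n) (q n) ≤ Real.sqrt (2 * (1 - B n ^ n)) :=
    fun n => (my_prod_facts n (p n) (q n) (hp0 n) (hq0 n) (hp1 n) (hq1 n)).2
  have hBpow1 : ∀ n : ℕ, B n ^ n ≤ 1 := fun n => pow_le_one₀ (hB0 n) (hB1 n)
  have hBpow0 : ∀ n : ℕ, 0 ≤ B n ^ n := fun n => pow_nonneg (hB0 n) n
  have hnh0 : ∀ n : ℕ, 0 ≤ (n : ℝ) * hellSq (p n) (q n) := by
    intro n
    rw [hhell n]
    exact mul_nonneg (Nat.cast_nonneg n) (by linarith [hB1 n])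
  constructor
  · intro hTV
    -- B^n → 1
    have hBn1 : Filter.Tendsto (fun n : ℕ => 1 - B n ^ n) Filter.atTop (nhds 0) := by
      refine tendsto_of_tendsto_of_tendsto_of_le_of_le tendsto_const_nhds hTV
        (fun n => by linarith [hBpow1 n]) (fun n => hlow n)
    -- exp(-(n h)) is squeezed between B^n and 1
    have hexp_ge : ∀ n : ℕ, B n ^ n ≤ Real.exp (-((n : ℝ) * hellSq (p n) (q n))) := by
      intro n
      rw [hhell n]
      have h1 : B n ≤ Real.exp (-(1 - B n)) := by
        have := Real.add_one_le_exp (-(1 - B n))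
        linarith
      calc B n ^ n ≤ (Real.exp (-(1 - B n))) ^ n := pow_le_pow_left₀ (hB0 n) h1 n
        _ = Real.exp (-((n : ℝ) * (1 - B n))) := by
            rw [← Real.exp_nat_mul]; ring_nf
    have hexp_le : ∀ n : ℕ, Real.exp (-((n : ℝ) * hellSq (p n) (q n))) ≤ 1 :=
      fun n => Real.exp_le_one_iff.mpr (neg_nonpos.mpr (hnh0 n))
    have hBn1' : Filter.Tendsto (fun n : ℕ => B n ^ n) Filter.atTop (nhds 1) := by
      have := hBn1.const_sub 1
      simpa using this
    have hexp : Filter.Tendsto (fun n : ℕ => Real.exp (-((n : ℝ) * hellSq (p n) (q n))))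
        Filter.atTop (nhds 1) :=
      tendsto_of_tendsto_of_tendsto_of_le_of_le hBn1' tendsto_const_nhds hexp_ge hexp_le
    have hlog : Filter.Tendsto
        (fun n : ℕ => Real.log (Real.exp (-((n : ℝ) * hellSq (p n) (q n)))))
        Filter.atTop (nhds (Real.log 1)) :=
      ((Real.continuousAt_log one_ne_zero).tendsto.comp hexp)
    simp only [Real.log_exp, Real.log_one] at hlog
    have := hlog.neg
    simpa using this
  · intro hnh
    -- Bernoulli : 1 - n h ≤ B^n
    have hber : ∀ n : ℕ, 1 - B n ^ n ≤ (n : ℝ) * hellSq (p n) (q n) := by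
      intro n
      rw [hhell n]
      have h2 : (-2 : ℝ) ≤ -(1 - B n) := by linarith [hB0 n]
      have := one_add_mul_le_pow h2 n
      have heq : (1 + -(1 - B n)) = B n := by ring
      rw [heq] at this
      linarith
    have hsq : Filter.Tendsto (fun n : ℕ => Real.sqrt (2 * ((n : ℝ) * hellSq (p n) (q n))))
        Filter.atTop (nhds 0) := by
      have h2 : Filter.Tendsto (fun n : ℕ => 2 * ((n : ℝ) * hellSq (p n) (q n)))
          Filter.atTop (nhds 0) := by
        have := hnh.const_mul (2 : ℝ)
        simpa using this
      have := (Real.continuous_sqrt.tendsto 0).comp h2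
      rw [Real.sqrt_zero] at this
      exact this
    refine tendsto_of_tendsto_of_tendsto_of_le_of_le tendsto_const_nhds hsq ?_ ?_
    · intro n
      have h1 : (0:ℝ) ≤ 1 - B n ^ n := by linarith [hBpow1 n]
      exact le_trans h1 (hlow n)
    · intro n
      refine le_trans (hhigh n) (Real.sqrt_le_sqrt ?_)
      have := hber n
      linarith
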